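/- Let n ≥ 1, r' ≥ 0, and 1 ≤ i ≤ j be integers, and let F_1, …, F_{n−r'} be finite subsets of {1,…,n}^j (the supports of n − r' columns of the j-th unfolding of a sampling pattern), each satisfying |F_c| ≥ r' + 1, such that for every nonempty subset T ⊆ {1,…,n−r'}, the number of distinct values of the i-th coordinate appearing among the elements of ⋃_{c∈T} F_c is at least |T| + r'. Then there exist subsets G_c ⊆ F_c with |G_c| = r' + 1 for every c, such that for every nonempty subset T ⊆ {1,…,n−r'}, the number of distinct values of the i-th coordinate appearing among the elements of ⋃_{c∈T} G_c is at least |T| + r'. -/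

import Mathlib

open Finset

private lemma removal {ι α β : Type*} [DecidableEq ι] [DecidableEq α] [DecidableEq β]
    (r' : ℕ) (π : α → β) (F : ι → Finset α)
    (hcov : ∀ T : Finset ι, T.Nonempty → T.card + r' ≤ ((T.biUnion F).image π).card)
    (c0 : ι) (h2 : r' + 2 ≤ (F c0).card) :
    ∃ x ∈ F c0, ∀ T : Finset ι, T.Nonempty →
      T.card + r' ≤ ((T.biUnion (Function.update F c0 ((F c0).erase x))).image π).card := by
  classical
  by_contra hcon
  push_neg at hcon
  choose T hTne hTlt using hcon
  have key : ∀ x (hx : x ∈ F c0), c0 ∈ T x hx ∧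
      ((((T x hx).biUnion F).image π).card = (T x hx).card + r') ∧
      (∀ c' ∈ T x hx, c' ≠ c0 → x ∉ F c') ∧
      π x ∉ ((((T x hx).biUnion F).erase x).image π) := by
    intro x hx
    have hlt := hTlt x hx
    have hge := hcov (T x hx) (hTne x hx)
    set S := T x hx with hS
    set F' := Function.update F c0 ((F c0).erase x) with hF'
    have herase : (S.biUnion F).erase x ⊆ S.biUnion F' := by
      intro y hy
      rw [mem_erase] at hy
      obtain ⟨hyx, hyB⟩ := hy
      rw [mem_biUnion] at hyB ⊢
      obtain ⟨c, hc, hyc⟩ := hyB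
      refine ⟨c, hc, ?_⟩
      by_cases h : c = c0
      · subst h; simp [hF', Function.update_self, mem_erase, hyx, hyc]
      · simp [hF', Function.update_of_ne h, hyc]
    have h1 : ((S.biUnion F).image π).card ≤ ((S.biUnion F').image π).card + 1 := by
      have hsub1 : (S.biUnion F).image π ⊆ insert (π x) (((S.biUnion F).erase x).image π) := by
        intro b hb
        rw [mem_image] at hb
        obtain ⟨z, hz, rfl⟩ := hb
        by_cases h : z = x
        · subst h; exact mem_insert_self _ _
        · exact mem_insert_of_mem (mem_image_of_mem _ (mem_erase.2 ⟨h, hz⟩))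
      calc ((S.biUnion F).image π).card
          ≤ (insert (π x) (((S.biUnion F).erase x).image π)).card := card_le_card hsub1
        _ ≤ (((S.biUnion F).erase x).image π).card + 1 := card_insert_le _ _
        _ ≤ ((S.biUnion F').image π).card + 1 :=
            Nat.add_le_add_right (card_le_card (image_subset_image herase)) 1
    have hmemc0 : c0 ∈ S := by
      by_contra hc0
      have heq : S.biUnion F' = S.biUnion F := biUnion_congr rfl (fun c hc => by
        have hne : c ≠ c0 := fun h => hc0 (h ▸ hc)
        simp [hF', Function.update_of_ne hne])
      rw [heq] at hlt; omega
    refine ⟨hmemc0, by omega, ?_, ?_⟩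
    · intro c' hc' hne hxc'
      have hxB' : x ∈ S.biUnion F' := by
        rw [mem_biUnion]
        exact ⟨c', hc', by simp [hF', Function.update_of_ne hne, hxc']⟩
      have hBB' : S.biUnion F ⊆ S.biUnion F' := by
        intro y hy
        by_cases h : y = x
        · subst h; exact hxB'
        · exact herase (mem_erase.2 ⟨h, hy⟩)
      have : ((S.biUnion F).image π).card ≤ ((S.biUnion F').image π).card :=
        card_le_card (image_subset_image hBB')
      omega
    · intro hpx
      have hsub2 : (S.biUnion F).image π ⊆ ((S.biUnion F).erase x).image π := by
        intro b hb
        rw [mem_image] at hb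
        obtain ⟨z, hz, rfl⟩ := hb
        by_cases h : z = x
        · subst h; exact hpx
        · exact mem_image_of_mem _ (mem_erase.2 ⟨h, hz⟩)
      have := card_le_card (hsub2.trans (image_subset_image herase))
      omega
  have inter_tight : ∀ T1 T2 : Finset ι, c0 ∈ T1 → c0 ∈ T2 →
      ((T1.biUnion F).image π).card = T1.card + r' →
      ((T2.biUnion F).image π).card = T2.card + r' →
      (((T1 ∩ T2).biUnion F).image π).card = (T1 ∩ T2).card + r' := by
    intro T1 T2 h1 h2' e1 e2
    have hu : ((T1 ∪ T2).biUnion F).image π = (T1.biUnion F).image π ∪ (T2.biUnion F).image π := by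
      have hb : (T1 ∪ T2).biUnion F = T1.biUnion F ∪ T2.biUnion F := by
        ext y
        simp only [mem_biUnion, mem_union]
        constructor
        · rintro ⟨c, hc | hc, hy⟩
          · exact Or.inl ⟨c, hc, hy⟩
          · exact Or.inr ⟨c, hc, hy⟩
        · rintro (⟨c, hc, hy⟩ | ⟨c, hc, hy⟩)
          · exact ⟨c, Or.inl hc, hy⟩
          · exact ⟨c, Or.inr hc, hy⟩
      rw [hb, image_union]
    have hi : ((T1 ∩ T2).biUnion F).image π ⊆ (T1.biUnion F).image π ∩ (T2.biUnion F).image π := by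
      intro b hb
      rw [mem_image] at hb
      obtain ⟨z, hz, rfl⟩ := hb
      rw [mem_biUnion] at hz
      obtain ⟨c, hc, hzc⟩ := hz
      rw [mem_inter] at hc
      exact mem_inter.2 ⟨mem_image_of_mem _ (mem_biUnion.2 ⟨c, hc.1, hzc⟩),
        mem_image_of_mem _ (mem_biUnion.2 ⟨c, hc.2, hzc⟩)⟩
    have hcards := card_union_add_card_inter ((T1.biUnion F).image π) ((T2.biUnion F).image π)
    have hcardT := card_union_add_card_inter T1 T2
    have g1 := hcov (T1 ∪ T2) ⟨c0, mem_union_left _ h1⟩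
    have g2 := hcov (T1 ∩ T2) ⟨c0, mem_inter.2 ⟨h1, h2'⟩⟩
    have l1 : (((T1 ∪ T2).biUnion F).image π).card
        = ((T1.biUnion F).image π ∪ (T2.biUnion F).image π).card := by rw [hu]
    have l2 := card_le_card hi
    have l3 : ((T1.biUnion F).image π ∩ (T2.biUnion F).image π).card
        ≤ ((T1.biUnion F).image π).card := card_le_card inter_subset_left
    omega
  have hFc0 : (F c0).Nonempty := card_pos.1 (by omega)
  obtain ⟨x0, hx0⟩ := hFc0
  have hPk : ∃ k, ∃ S : Finset ι, c0 ∈ S ∧ ((S.biUnion F).image π).card = S.card + r' ∧ S.card = k :=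
    ⟨_, T x0 hx0, (key x0 hx0).1, (key x0 hx0).2.1, rfl⟩
  obtain ⟨Ts, hcTs, htight, hcardTs⟩ := Nat.find_spec hPk
  have hmin : ∀ x (hx : x ∈ F c0), Ts ⊆ T x hx := by
    intro x hx
    obtain ⟨hc, ht, -, -⟩ := key x hx
    have hinter := inter_tight Ts (T x hx) hcTs hc htight ht
    have hle : Nat.find hPk ≤ (Ts ∩ T x hx).card :=
      Nat.find_min' hPk ⟨Ts ∩ T x hx, mem_inter.2 ⟨hcTs, hc⟩, hinter, rfl⟩
    have hcardle : (Ts ∩ T x hx).card ≤ Ts.card := card_le_card inter_subset_left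
    have heq : Ts ∩ T x hx = Ts := eq_of_subset_of_card_le inter_subset_left (by omega)
    rw [← heq]; exact inter_subset_right
  have hinj : Set.InjOn π (F c0) := by
    intro x hx y hy hxy
    by_contra hne
    apply (key x hx).2.2.2
    rw [hxy]
    exact mem_image_of_mem _ (mem_erase.2 ⟨fun h => hne h.symm,
      mem_biUnion.2 ⟨c0, (key x hx).1, hy⟩⟩)
  have hcardimg : ((F c0).image π).card = (F c0).card := card_image_of_injOn hinj
  by_cases hT' : (Ts.erase c0).Nonempty
  · have hdisj : Disjoint (((Ts.erase c0).biUnion F).image π) ((F c0).image π) := by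
      rw [disjoint_left]
      intro b hb1 hb2
      rw [mem_image] at hb1 hb2
      obtain ⟨y, hy, hyb⟩ := hb1
      obtain ⟨x, hx, rfl⟩ := hb2
      rw [mem_biUnion] at hy
      obtain ⟨c', hc', hyc'⟩ := hy
      have hc'Ts : c' ∈ Ts := (erase_subset _ _) hc'
      have hc'ne : c' ≠ c0 := (mem_erase.1 hc').1
      have hc'Tx : c' ∈ T x hx := hmin x hx hc'Ts
      have hxnot := (key x hx).2.2.1 c' hc'Tx hc'ne
      have hyx : y ≠ x := fun h => hxnot (h ▸ hyc')
      exact (key x hx).2.2.2 (hyb ▸ mem_image_of_mem _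
        (mem_erase.2 ⟨hyx, mem_biUnion.2 ⟨c', hc'Tx, hyc'⟩⟩))
    have hsub : ((Ts.erase c0).biUnion F).image π ∪ (F c0).image π ⊆ (Ts.biUnion F).image π := by
      apply union_subset
      · exact image_subset_image (biUnion_subset_biUnion_of_subset_left _ (erase_subset _ _))
      · exact image_subset_image (subset_biUnion_of_mem _ hcTs)
    have hcu := card_union_of_disjoint hdisj
    have hle := card_le_card hsub
    have hcovT' := hcov (Ts.erase c0) hT'
    have hcT' : (Ts.erase c0).card = Ts.card - 1 := card_erase_of_mem hcTs
    have hTs1 : 1 ≤ Ts.card := card_pos.2 ⟨c0, hcTs⟩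
    omega
  · have hTs : Ts = {c0} := by
      rw [not_nonempty_iff_eq_empty, erase_eq_empty_iff] at hT'
      rcases hT' with h | h
      · exact absurd (h ▸ hcTs) (notMem_empty c0)
      · exact h
    rw [hTs, singleton_biUnion] at htight
    rw [card_singleton] at htight
    omega

private lemma auxmain {ι α β : Type*} [DecidableEq ι] [DecidableEq α] [DecidableEq β]
    [Fintype ι] (r' : ℕ) (π : α → β) : ∀ (N : ℕ) (F : ι → Finset α),
    (∀ c, r' + 1 ≤ (F c).card) →
    (∀ T : Finset ι, T.Nonempty → T.card + r' ≤ ((T.biUnion F).image π).card) →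
    ∑ c, (F c).card = N →
    ∃ G : ι → Finset α, (∀ c, G c ⊆ F c ∧ (G c).card = r' + 1) ∧
      ∀ T : Finset ι, T.Nonempty → T.card + r' ≤ ((T.biUnion G).image π).card := by
  intro N
  induction N using Nat.strong_induction_on with
  | _ N ih =>
    intro F hF hcov hsum
    by_cases hall : ∀ c, (F c).card ≤ r' + 1
    · exact ⟨F, fun c => ⟨subset_rfl, le_antisymm (hall c) (hF c)⟩, hcov⟩
    · push_neg at hall
      obtain ⟨c0, hc0⟩ := hall
      have h2 : r' + 2 ≤ (F c0).card := hc0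
      obtain ⟨x, hx, hcov'⟩ := removal r' π F hcov c0 h2
      set F' := Function.update F c0 ((F c0).erase x) with hF'def
      have hsubF : ∀ c, F' c ⊆ F c := by
        intro c
        by_cases h : c = c0
        · subst h; simp only [hF'def, Function.update_self]; exact erase_subset _ _
        · simp [hF'def, Function.update_of_ne h]
      have hF'card : ∀ c, r' + 1 ≤ (F' c).card := by
        intro c
        by_cases h : c = c0
        · subst h
          simp only [hF'def, Function.update_self, card_erase_of_mem hx]
          omega
        · simp only [hF'def, Function.update_of_ne h]; exact hF c
      have hsumlt : ∑ c, (F' c).card < N := by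
        have : ∑ c, (F' c).card < ∑ c, (F c).card := by
          apply Finset.sum_lt_sum (fun c _ => card_le_card (hsubF c))
          refine ⟨c0, mem_univ _, ?_⟩
          simp only [hF'def, Function.update_self, card_erase_of_mem hx]
          omega
        omega
      obtain ⟨G, hG1, hG2⟩ := ih _ hsumlt F' hF'card hcov' rfl
      exact ⟨G, fun c => ⟨(hG1 c).1.trans (hsubF c), (hG1 c).2⟩, hG2⟩

theorem stmt6 (n r' i j : ℕ) (hn : 1 ≤ n) (hi1 : 1 ≤ i) (hij : i ≤ j)
    (F : Fin (n - r') → Finset (Fin j → Fin n))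
    (hF : ∀ c, r' + 1 ≤ (F c).card)
    (hcov : ∀ T : Finset (Fin (n - r')), T.Nonempty →
      T.card + r' ≤ ((T.biUnion F).image (fun v => v ⟨i - 1, by omega⟩)).card) :
    ∃ G : Fin (n - r') → Finset (Fin j → Fin n),
      (∀ c, G c ⊆ F c ∧ (G c).card = r' + 1) ∧
      ∀ T : Finset (Fin (n - r')), T.Nonempty →
        T.card + r' ≤ ((T.biUnion G).image (fun v => v ⟨i - 1, by omega⟩)).card := by
  classical
  exact auxmain r' (fun v => v ⟨i - 1, by omega⟩) (∑ c, (F c).card) F hF hcov rfl
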